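/- Let n and k be positive integers with 2 ≤ k ≤ n and 2 dividing n. The maximum, over all 2-colorings χ of an n-element vertex set V, of the number of k-element subsets of V on which χ takes both colors (i.e., the non-monochromatic k-subsets) equals C(n,k) − 2·C(n/2, k), where C(a,b) denotes the binomial coefficient (with C(a,b) = 0 when a < b). -/

import Mathlib

lemma conv_choose (m j : ℕ) : ∀ d, d ≤ m →
    2 * m.choose (j+1) ≤ (m-d).choose (j+1) + (m+d).choose (j+1) := by
  intro d
  induction d with
  | zero => simp; omega
  | succ d ih =>
    intro h
    have hd : d ≤ m := by omega
    have e1 : m - d = (m - (d+1)) + 1 := by omega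
    have e2 : m + (d+1) = (m + d) + 1 := by omega
    have p1 : (m - d).choose (j+1) = (m-(d+1)).choose j + (m-(d+1)).choose (j+1) := by
      rw [e1, Nat.choose_succ_succ]
    have p2 : (m + (d+1)).choose (j+1) = (m+d).choose j + (m+d).choose (j+1) := by
      rw [e2, Nat.choose_succ_succ]
    have mono : (m-(d+1)).choose j ≤ (m+d).choose j := Nat.choose_le_choose _ (by omega)
    have := ih hd
    omega

lemma count_eq (k : ℕ) (hk : 1 ≤ k) {V : Type*} [Fintype V] [DecidableEq V] (χ : V → Fin 2) :
    (((Finset.univ : Finset V).powersetCard k).filter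
        (fun e : Finset V => (e.image χ).card = 2)).card
      + ((Finset.univ.filter (fun v => χ v = 0)).card).choose k
      + ((Finset.univ.filter (fun v => ¬ χ v = 0)).card).choose k
      = (Fintype.card V).choose k := by
  classical
  set A := Finset.univ.filter (fun v => χ v = 0) with hA
  set B := Finset.univ.filter (fun v => ¬ χ v = 0) with hB
  have h1 : ((Finset.univ : Finset V).powersetCard k).filter (fun e : Finset V => ¬ ((e.image χ).card = 2)) =
      A.powersetCard k ∪ B.powersetCard k := by
    ext e
    simp only [Finset.mem_filter, Finset.mem_powersetCard, Finset.mem_union, hA, hB]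
    constructor
    · rintro ⟨⟨-, hcard⟩, hne⟩
      have hle : (e.image χ).card ≤ 2 := by
        have := Finset.card_le_univ (e.image χ)
        simpa using this
      have hone : (e.image χ).card ≤ 1 := by omega
      have hne' : e.Nonempty := by
        rw [← Finset.card_pos, hcard]; omega
      obtain ⟨v, hv⟩ := hne'
      have hall : ∀ u ∈ e, χ u = χ v := by
        intro u hu
        have := Finset.card_le_one.mp hone (χ u) (Finset.mem_image_of_mem χ hu)
          (χ v) (Finset.mem_image_of_mem χ hv)
        exact this
      by_cases h0 : χ v = 0
      · left
        refine ⟨fun u hu => ?_, hcard⟩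
        simp only [Finset.mem_filter, Finset.mem_univ, true_and]
        rw [hall u hu]; exact h0
      · right
        refine ⟨fun u hu => ?_, hcard⟩
        simp only [Finset.mem_filter, Finset.mem_univ, true_and]
        rw [hall u hu]; exact h0
    · rintro (⟨hsub, hcard⟩ | ⟨hsub, hcard⟩)
      all_goals refine ⟨⟨Finset.subset_univ _, hcard⟩, ?_⟩
      · have : e.image χ ⊆ {0} := by
          intro x hx
          obtain ⟨u, hu, rfl⟩ := Finset.mem_image.mp hx
          have := hsub hu
          simp only [Finset.mem_filter] at this
          simpa using this.2
        have := Finset.card_le_card this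
        simp at this; omega
      · have : e.image χ ⊆ {1} := by
          intro x hx
          obtain ⟨u, hu, rfl⟩ := Finset.mem_image.mp hx
          have := hsub hu
          simp only [Finset.mem_filter] at this
          have h1 : χ u ≠ 0 := this.2
          have h2 := (χ u).isLt
          have h3 : (χ u).val ≠ 0 := fun hh => h1 (Fin.ext hh)
          simp only [Finset.mem_singleton]
          apply Fin.ext
          simp only [Fin.val_one]
          omega
        have := Finset.card_le_card this
        simp at this; omega
  have hdisj : Disjoint (A.powersetCard k) (B.powersetCard k) := by
    rw [Finset.disjoint_left]
    intro e heA heB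
    rw [Finset.mem_powersetCard] at heA heB
    have hne : e.Nonempty := by rw [← Finset.card_pos, heA.2]; omega
    obtain ⟨v, hv⟩ := hne
    have h1 := heA.1 hv
    have h2 := heB.1 hv
    simp [hA, hB] at h1 h2
    exact h2 h1
  have hsplit := Finset.card_filter_add_card_filter_not
    (s := (Finset.univ : Finset V).powersetCard k) (p := fun e : Finset V => (e.image χ).card = 2)
  rw [h1, Finset.card_union_of_disjoint hdisj, Finset.card_powersetCard,
    Finset.card_powersetCard] at hsplit
  rw [Finset.card_powersetCard, Finset.card_univ] at hsplit
  omega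

theorem stmt_10 (n k : ℕ) (hk : 2 ≤ k) (hkn : k ≤ n) (h2n : 2 ∣ n)
    (V : Type*) [Fintype V] [DecidableEq V] (hV : Fintype.card V = n) :
    (∃ χ : V → Fin 2,
        (((((Finset.univ : Finset V).powersetCard k).filter
            (fun e : Finset V => (e.image χ).card = 2)).card : ℤ)) =
          (n.choose k : ℤ) - 2 * ((n / 2).choose k : ℤ)) ∧
      (∀ χ : V → Fin 2,
        (((((Finset.univ : Finset V).powersetCard k).filter
            (fun e : Finset V => (e.image χ).card = 2)).card : ℤ)) ≤
          (n.choose k : ℤ) - 2 * ((n / 2).choose k : ℤ)) := by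
  classical
  obtain ⟨m, hm⟩ := h2n
  have hm2 : n / 2 = m := by omega
  obtain ⟨j, hj⟩ : ∃ j, k = j + 1 := ⟨k - 1, by omega⟩
  constructor
  · -- existence
    obtain ⟨S, -, hS⟩ := Finset.exists_subset_card_eq (s := (Finset.univ : Finset V)) (n := m)
      (by rw [Finset.card_univ, hV]; omega)
    refine ⟨fun v => if v ∈ S then 0 else 1, ?_⟩
    have hkey := count_eq k (by omega) (V := V) (fun v => if v ∈ S then 0 else 1)
    have hAs : Finset.univ.filter (fun v => (if v ∈ S then (0 : Fin 2) else 1) = 0) = S := by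
      ext v
      simp only [Finset.mem_filter, Finset.mem_univ, true_and]
      by_cases h : v ∈ S <;> simp [h]
    have hBs : (Finset.univ.filter (fun v => ¬ (if v ∈ S then (0 : Fin 2) else 1) = 0)).card
        = n - m := by
      have := Finset.card_filter_add_card_filter_not
        (s := (Finset.univ : Finset V))
        (p := fun v => (if v ∈ S then (0 : Fin 2) else 1) = 0)
      rw [hAs, Finset.card_univ, hV, hS] at this
      omega
    rw [hAs, hS, hBs] at hkey
    have hnm : n - m = m := by omega
    rw [hnm] at hkey
    rw [hV] at hkey
    rw [hm2]
    push_cast [← hkey]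
    ring
  · intro χ
    have hkey := count_eq k (by omega) (V := V) χ
    set a := (Finset.univ.filter (fun v => χ v = 0)).card with ha
    set b := (Finset.univ.filter (fun v => ¬ χ v = 0)).card with hb
    have hab : a + b = n := by
      have := Finset.card_filter_add_card_filter_not
        (s := (Finset.univ : Finset V)) (p := fun v => χ v = 0)
      rw [Finset.card_univ, hV] at this
      exact this
    have hconv : 2 * m.choose k ≤ a.choose k + b.choose k := by
      rcases le_total a m with h | h
      · have := conv_choose m j (m - a) (by omega)
        have e1 : m - (m - a) = a := by omega
        have e2 : m + (m - a) = b := by omega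
        rw [e1, e2, ← hj] at this
        exact this
      · have hbm : b ≤ m := by omega
        have := conv_choose m j (m - b) (by omega)
        have e1 : m - (m - b) = b := by omega
        have e2 : m + (m - b) = a := by omega
        rw [e1, e2, ← hj] at this
        omega
    rw [hV] at hkey
    rw [hm2]
    have := Nat.choose_le_choose k (show m ≤ n by omega)
    push_cast at *
    omega
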